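/- Let f : ℝ → ℝ be a nonnegative measurable probability density with CDF F and finite first moment ∫ |v| f(v) dv < ∞. Let α > 0, let μ ∈ [0,1], and let q ∈ ℝ satisfy F(q) = μ. Define h₁⋆(v₁,v₂) = 1{ v₂ ≤ max(q, v₁/α) } and h₂⋆(v₁,v₂) = 1{ v₁ ≤ max(q, v₂/α) }. Then for every pair of measurable functions h₁, h₂ : ℝ² → [0,1] satisfying, for almost every v₁, ∫ h₁(v₁,v₂) f(v₂) dv₂ ≥ μ, and for almost every v₂, ∫ h₂(v₁,v₂) f(v₁) dv₁ ≥ μ, one has ∫∫ [ (v₁ − α v₂) h₁(v₁,v₂) + (v₂ − α v₁) h₂(v₁,v₂) ] f(v₁) f(v₂) dv₁ dv₂ ≤ ∫∫ [ (v₁ − α v₂) h₁⋆(v₁,v₂) + (v₂ − α v₁) h₂⋆(v₁,v₂) ] f(v₁) f(v₂) dv₁ dv₂, and (h₁⋆, h₂⋆) satisfies the same constraints. -/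

import Mathlib

open MeasureTheory Set

/-- Integrability of `(a - b v) g v f v` when `|g| ≤ 1` and `f`, `|v| f` are integrable. -/
lemma integ_coef {f : ℝ → ℝ} (hf_meas : Measurable f) (hf_nonneg : ∀ v, 0 ≤ f v)
    (hfi : Integrable f) (hmi : Integrable (fun v => |v| * f v))
    (a b : ℝ) (g : ℝ → ℝ) (hg : AEStronglyMeasurable g volume) (hg1 : ∀ v, |g v| ≤ 1) :
    Integrable (fun v => (a - b * v) * g v * f v) := by
  refine Integrable.mono' ((hfi.const_mul |a|).add (hmi.const_mul |b|)) ?_ ?_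
  · exact (((measurable_const.sub (measurable_id.const_mul b)).aestronglyMeasurable.mul hg).mul
      hf_meas.aestronglyMeasurable)
  · refine Filter.Eventually.of_forall fun v => ?_
    have h1 : |a - b * v| ≤ |a| + |b| * |v| := by
      have := norm_sub_le a (b * v)
      simpa [Real.norm_eq_abs, abs_mul] using this
    have h2 : ‖(a - b * v) * g v * f v‖ = |a - b * v| * |g v| * f v := by
      rw [Real.norm_eq_abs, abs_mul, abs_mul, abs_of_nonneg (hf_nonneg v)]
    rw [h2]
    have h3 : |a - b * v| * |g v| ≤ (|a| + |b| * |v|) * 1 :=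
      mul_le_mul h1 (hg1 v) (abs_nonneg _) (by positivity)
    have h4 := mul_le_mul_of_nonneg_right h3 (hf_nonneg v)
    simp only [Pi.add_apply]
    calc |a - b * v| * |g v| * f v ≤ (|a| + |b| * |v|) * 1 * f v := h4
      _ = |a| * f v + |b| * (|v| * f v) := by ring

/-- Obedience of the threshold rule. -/
lemma obed {f : ℝ → ℝ} (hf_nonneg : ∀ v, 0 ≤ f v)
    (hfi : Integrable f) {μ q : ℝ} (hq : ∫ v in Iic q, f v = μ) (m : ℝ) (hm : q ≤ m) :
    μ ≤ ∫ v, (if v ≤ m then (1:ℝ) else 0) * f v := by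
  have h1 : (fun v => (if v ≤ m then (1:ℝ) else 0) * f v) = (Iic m).indicator f := by
    ext v; simp [Set.indicator_apply, mem_Iic, ite_mul]
  rw [h1, integral_indicator measurableSet_Iic, ← hq]
  exact setIntegral_mono_set hfi.integrableOn
    (Filter.Eventually.of_forall fun v => hf_nonneg v)
    ((Iic_subset_Iic.mpr hm).eventuallyLE)

/-- Key pointwise optimality: for fixed `c`, the indicator of `Iic (max q (c/α))` maximizes
`∫ (c - α v) g v f v` over `g ∈ [0,1]` with `∫ g f ≥ μ`. -/
lemma key {f : ℝ → ℝ} (hf_meas : Measurable f) (hf_nonneg : ∀ v, 0 ≤ f v)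
    (hfi : Integrable f) (hmi : Integrable (fun v => |v| * f v))
    {α : ℝ} (hα : 0 < α) {μ q : ℝ} (hq : ∫ v in Iic q, f v = μ)
    (c : ℝ) (g : ℝ → ℝ) (hg : AEStronglyMeasurable g volume)
    (hg01 : ∀ v, g v ∈ Icc (0:ℝ) 1) (hgc : μ ≤ ∫ v, g v * f v) :
    ∫ v, (c - α * v) * g v * f v ≤
      ∫ v, (c - α * v) * (if v ≤ max q (c / α) then (1:ℝ) else 0) * f v := by
  set m := max q (c / α) with hm_def
  set χ : ℝ → ℝ := fun v => if v ≤ m then (1:ℝ) else 0 with hχ_def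
  have hχ_meas : Measurable χ := by
    apply Measurable.ite _ measurable_const measurable_const
    exact measurableSet_Iic
  have hχ1 : ∀ v, |χ v| ≤ 1 := by
    intro v; simp only [hχ_def]; split <;> norm_num
  have hg1 : ∀ v, |g v| ≤ 1 := by
    intro v; rw [abs_le]; exact ⟨by linarith [(hg01 v).1], (hg01 v).2⟩
  have I_g : Integrable (fun v => (c - α * v) * g v * f v) :=
    integ_coef hf_meas hf_nonneg hfi hmi c α g hg hg1
  have I_χ : Integrable (fun v => (c - α * v) * χ v * f v) :=
    integ_coef hf_meas hf_nonneg hfi hmi c α χ hχ_meas.aestronglyMeasurable hχ1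
  have I_gf : Integrable (fun v => g v * f v) := by
    refine Integrable.mono' hfi (hg.mul hf_meas.aestronglyMeasurable) ?_
    refine Filter.Eventually.of_forall fun v => ?_
    rw [Real.norm_eq_abs, abs_mul, abs_of_nonneg (hf_nonneg v)]
    nlinarith [hg1 v, hf_nonneg v, abs_nonneg (g v)]
  have I_χf : Integrable (fun v => χ v * f v) := by
    refine Integrable.mono' hfi (hχ_meas.aestronglyMeasurable.mul hf_meas.aestronglyMeasurable) ?_
    refine Filter.Eventually.of_forall fun v => ?_
    rw [Real.norm_eq_abs, abs_mul, abs_of_nonneg (hf_nonneg v)]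
    nlinarith [hχ1 v, hf_nonneg v, abs_nonneg (χ v)]
  have hχint : ∫ v, χ v * f v = ∫ v in Iic m, f v := by
    rw [← integral_indicator measurableSet_Iic]
    congr 1; ext v; simp [hχ_def, Set.indicator_apply, mem_Iic, ite_mul]
  have hpt : ∀ v, (c - α * m) * ((χ v - g v) * f v) ≤
      (c - α * v) * χ v * f v - (c - α * v) * g v * f v := by
    intro v
    have hf0 := hf_nonneg v
    have hgv := hg01 v
    by_cases hvm : v ≤ m
    · simp only [hχ_def, if_pos hvm]
      have h1 : c - α * m ≤ c - α * v := by nlinarith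
      have h2 : (0:ℝ) ≤ (1 - g v) * f v := mul_nonneg (by linarith [hgv.2]) hf0
      nlinarith [mul_le_mul_of_nonneg_right h1 h2]
    · simp only [hχ_def, if_neg hvm]
      have hmv : m < v := not_le.mp hvm
      have h1 : c - α * v ≤ c - α * m := by nlinarith
      have h2 : (0:ℝ) ≤ g v * f v := mul_nonneg hgv.1 hf0
      nlinarith [mul_le_mul_of_nonneg_right h1 h2]
  have Ileft : Integrable (fun v => (c - α * m) * ((χ v - g v) * f v)) := by
    have h := ((I_χf.sub I_gf).const_mul (c - α * m))
    refine h.congr (Filter.Eventually.of_forall fun v => ?_)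
    simp only [Pi.sub_apply]
    ring
  have Iright : Integrable (fun v => (c - α * v) * χ v * f v - (c - α * v) * g v * f v) :=
    I_χ.sub I_g
  have hint : ∫ v, (c - α * m) * ((χ v - g v) * f v) ≤
      ∫ v, ((c - α * v) * χ v * f v - (c - α * v) * g v * f v) :=
    integral_mono Ileft Iright hpt
  have hval : ∫ v, (c - α * m) * ((χ v - g v) * f v) =
      (c - α * m) * ((∫ v, χ v * f v) - ∫ v, g v * f v) := by
    rw [integral_const_mul, ← integral_sub I_χf I_gf]
    congr 1; apply integral_congr_ae; refine Filter.Eventually.of_forall fun v => ?_; ring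
  have h0 : 0 ≤ (c - α * m) * ((∫ v, χ v * f v) - ∫ v, g v * f v) := by
    rcases le_or_gt (c / α) q with hcq | hcq
    · have hm : m = q := max_eq_left hcq
      have hc : c - α * m ≤ 0 := by
        rw [hm]
        have := (div_le_iff₀ hα).mp hcq
        linarith
      have hval2 : ∫ v, χ v * f v = μ := by rw [hχint, hm, hq]
      have h2 : (∫ v, χ v * f v) - ∫ v, g v * f v ≤ 0 := by rw [hval2]; linarith
      nlinarith [mul_nonneg (neg_nonneg.mpr hc) (neg_nonneg.mpr h2)]
    · have hm : m = c / α := max_eq_right hcq.le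
      have hc : c - α * m = 0 := by rw [hm]; field_simp; ring
      rw [hc]; simp
  have hsub : ∫ v, ((c - α * v) * χ v * f v - (c - α * v) * g v * f v) =
      (∫ v, (c - α * v) * χ v * f v) - ∫ v, (c - α * v) * g v * f v :=
    integral_sub I_χ I_g
  rw [hval] at hint
  rw [hsub] at hint
  linarith

/-- Joint integrability on the product space. -/
lemma integ_prod {f : ℝ → ℝ} (hf_meas : Measurable f) (hf_nonneg : ∀ v, 0 ≤ f v)
    (hfi : Integrable f) (hmi : Integrable (fun v => |v| * f v))
    {α : ℝ} (hα : 0 < α)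
    (c : ℝ × ℝ → ℝ) (hc : Measurable c) (hcb : ∀ p, |c p| ≤ (1 + α) * (|p.1| + |p.2|))
    (H : ℝ × ℝ → ℝ) (hH : AEStronglyMeasurable H ((volume : Measure ℝ).prod volume))
    (hH1 : ∀ p, |H p| ≤ 1) :
    Integrable (fun p : ℝ × ℝ => c p * H p * (f p.1 * f p.2))
      ((volume : Measure ℝ).prod volume) := by
  have hB : Integrable (fun p : ℝ × ℝ =>
      (1 + α) * ((|p.1| * f p.1) * f p.2) + (1 + α) * (f p.1 * (|p.2| * f p.2)))
      ((volume : Measure ℝ).prod volume) :=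
    ((hmi.mul_prod hfi).const_mul (1 + α)).add ((hfi.mul_prod hmi).const_mul (1 + α))
  refine Integrable.mono' hB ?_ ?_
  · exact ((hc.aestronglyMeasurable.mul hH).mul
      ((hf_meas.comp measurable_fst).aestronglyMeasurable.mul
        (hf_meas.comp measurable_snd).aestronglyMeasurable))
  · refine Filter.Eventually.of_forall fun p => ?_
    have hf1 := hf_nonneg p.1
    have hf2 := hf_nonneg p.2
    have h2 : ‖c p * H p * (f p.1 * f p.2)‖ = |c p| * |H p| * (f p.1 * f p.2) := by
      rw [Real.norm_eq_abs, abs_mul, abs_mul, abs_mul, abs_of_nonneg hf1, abs_of_nonneg hf2]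
    rw [h2]
    have h3 : |c p| * |H p| ≤ ((1 + α) * (|p.1| + |p.2|)) * 1 :=
      mul_le_mul (hcb p) (hH1 p) (abs_nonneg _) (by positivity)
    have h4 := mul_le_mul_of_nonneg_right h3 (mul_nonneg hf1 hf2)
    calc |c p| * |H p| * (f p.1 * f p.2)
        ≤ ((1 + α) * (|p.1| + |p.2|)) * 1 * (f p.1 * f p.2) := h4
      _ = (1 + α) * ((|p.1| * f p.1) * f p.2) + (1 + α) * (f p.1 * (|p.2| * f p.2)) := by ring

/-- Welfare-optimal information sale for the binary game: the rule
`h₁⋆(v₁,v₂) = 1{v₂ ≤ max(q, v₁/α)}`, `h₂⋆(v₁,v₂) = 1{v₁ ≤ max(q, v₂/α)}` is obedient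
and maximizes expected welfare among obedient rules. -/
theorem stmt_2
    (f : ℝ → ℝ) (hf_meas : Measurable f) (hf_nonneg : ∀ v, 0 ≤ f v)
    (hf_prob : ∫ v, f v = 1)
    (hf_mom : Integrable (fun v => |v| * f v))
    (α : ℝ) (hα : 0 < α)
    (μ : ℝ) (hμ : μ ∈ Icc (0:ℝ) 1)
    (q : ℝ) (hq : ∫ v in Iic q, f v = μ) :
    (∀ v₁, μ ≤ ∫ v₂, (if v₂ ≤ max q (v₁ / α) then (1:ℝ) else 0) * f v₂) ∧
    (∀ v₂, μ ≤ ∫ v₁, (if v₁ ≤ max q (v₂ / α) then (1:ℝ) else 0) * f v₁) ∧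
    ∀ h₁ h₂ : ℝ → ℝ → ℝ,
      Measurable (fun p : ℝ × ℝ => h₁ p.1 p.2) →
      Measurable (fun p : ℝ × ℝ => h₂ p.1 p.2) →
      (∀ v₁ v₂, h₁ v₁ v₂ ∈ Icc (0:ℝ) 1) →
      (∀ v₁ v₂, h₂ v₁ v₂ ∈ Icc (0:ℝ) 1) →
      (∀ᵐ v₁ ∂(volume : Measure ℝ), μ ≤ ∫ v₂, h₁ v₁ v₂ * f v₂) →
      (∀ᵐ v₂ ∂(volume : Measure ℝ), μ ≤ ∫ v₁, h₂ v₁ v₂ * f v₁) →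
      ∫ v₁, ∫ v₂, ((v₁ - α * v₂) * h₁ v₁ v₂ + (v₂ - α * v₁) * h₂ v₁ v₂) * (f v₁ * f v₂) ≤
        ∫ v₁, ∫ v₂, ((v₁ - α * v₂) * (if v₂ ≤ max q (v₁ / α) then (1:ℝ) else 0)
          + (v₂ - α * v₁) * (if v₁ ≤ max q (v₂ / α) then (1:ℝ) else 0)) * (f v₁ * f v₂) := by
  have hfi : Integrable f := by
    by_contra h
    rw [integral_undef h] at hf_prob
    norm_num at hf_prob
  refine ⟨fun v₁ => obed hf_nonneg hfi hq _ (le_max_left _ _),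
          fun v₂ => obed hf_nonneg hfi hq _ (le_max_left _ _), ?_⟩
  intro h₁ h₂ hm₁ hm₂ hb₁ hb₂ hc₁ hc₂
  -- coefficient bounds
  have hcb1 : ∀ p : ℝ × ℝ, |p.1 - α * p.2| ≤ (1 + α) * (|p.1| + |p.2|) := by
    intro p
    have := norm_sub_le p.1 (α * p.2)
    rw [Real.norm_eq_abs, Real.norm_eq_abs, Real.norm_eq_abs, abs_mul,
      abs_of_pos hα] at this
    nlinarith [abs_nonneg p.1, abs_nonneg p.2]
  have hcb2 : ∀ p : ℝ × ℝ, |p.2 - α * p.1| ≤ (1 + α) * (|p.1| + |p.2|) := by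
    intro p
    have := norm_sub_le p.2 (α * p.1)
    rw [Real.norm_eq_abs, Real.norm_eq_abs, Real.norm_eq_abs, abs_mul,
      abs_of_pos hα] at this
    nlinarith [abs_nonneg p.1, abs_nonneg p.2]
  have hc1meas : Measurable fun p : ℝ × ℝ => p.1 - α * p.2 :=
    measurable_fst.sub (measurable_snd.const_mul α)
  have hc2meas : Measurable fun p : ℝ × ℝ => p.2 - α * p.1 :=
    measurable_snd.sub (measurable_fst.const_mul α)
  -- indicator rules
  set χ₁ : ℝ × ℝ → ℝ := fun p => if p.2 ≤ max q (p.1 / α) then (1:ℝ) else 0 with hχ₁def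
  set χ₂ : ℝ × ℝ → ℝ := fun p => if p.1 ≤ max q (p.2 / α) then (1:ℝ) else 0 with hχ₂def
  have hχ₁meas : Measurable χ₁ := by
    apply Measurable.ite _ measurable_const measurable_const
    exact measurableSet_le measurable_snd (measurable_const.max (measurable_fst.div_const α))
  have hχ₂meas : Measurable χ₂ := by
    apply Measurable.ite _ measurable_const measurable_const
    exact measurableSet_le measurable_fst (measurable_const.max (measurable_snd.div_const α))
  have hχ₁1 : ∀ p, |χ₁ p| ≤ 1 := by intro p; simp only [hχ₁def]; split <;> norm_num
  have hχ₂1 : ∀ p, |χ₂ p| ≤ 1 := by intro p; simp only [hχ₂def]; split <;> norm_num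
  have hh₁1 : ∀ p : ℝ × ℝ, |h₁ p.1 p.2| ≤ 1 := by
    intro p; rw [abs_le]
    exact ⟨by linarith [(hb₁ p.1 p.2).1], (hb₁ p.1 p.2).2⟩
  have hh₂1 : ∀ p : ℝ × ℝ, |h₂ p.1 p.2| ≤ 1 := by
    intro p; rw [abs_le]
    exact ⟨by linarith [(hb₂ p.1 p.2).1], (hb₂ p.1 p.2).2⟩
  -- joint integrability of the four pieces
  have hF1 : Integrable (fun p : ℝ × ℝ => (p.1 - α * p.2) * h₁ p.1 p.2 * (f p.1 * f p.2))
      ((volume : Measure ℝ).prod volume) :=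
    integ_prod hf_meas hf_nonneg hfi hf_mom hα _ hc1meas hcb1 _ hm₁.aestronglyMeasurable hh₁1
  have hF2 : Integrable (fun p : ℝ × ℝ => (p.2 - α * p.1) * h₂ p.1 p.2 * (f p.1 * f p.2))
      ((volume : Measure ℝ).prod volume) :=
    integ_prod hf_meas hf_nonneg hfi hf_mom hα _ hc2meas hcb2 _ hm₂.aestronglyMeasurable hh₂1
  have hS1 : Integrable (fun p : ℝ × ℝ => (p.1 - α * p.2) * χ₁ p * (f p.1 * f p.2))
      ((volume : Measure ℝ).prod volume) :=
    integ_prod hf_meas hf_nonneg hfi hf_mom hα _ hc1meas hcb1 _ hχ₁meas.aestronglyMeasurable hχ₁1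
  have hS2 : Integrable (fun p : ℝ × ℝ => (p.2 - α * p.1) * χ₂ p * (f p.1 * f p.2))
      ((volume : Measure ℝ).prod volume) :=
    integ_prod hf_meas hf_nonneg hfi hf_mom hα _ hc2meas hcb2 _ hχ₂meas.aestronglyMeasurable hχ₂1
  -- rewrite the iterated integrals as product integrals
  have hLHS : (∫ v₁, ∫ v₂, ((v₁ - α * v₂) * h₁ v₁ v₂ + (v₂ - α * v₁) * h₂ v₁ v₂)
        * (f v₁ * f v₂)) =
      (∫ p : ℝ × ℝ, (p.1 - α * p.2) * h₁ p.1 p.2 * (f p.1 * f p.2)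
          ∂((volume : Measure ℝ).prod volume)) +
      ∫ p : ℝ × ℝ, (p.2 - α * p.1) * h₂ p.1 p.2 * (f p.1 * f p.2)
          ∂((volume : Measure ℝ).prod volume) := by
    rw [← integral_add hF1 hF2]
    rw [integral_integral ((hF1.add hF2).congr (Filter.Eventually.of_forall fun p => by
      simp only [Function.uncurry, Pi.add_apply]; ring))]
    apply integral_congr_ae
    refine Filter.Eventually.of_forall fun p => ?_
    ring
  have hRHS : (∫ v₁, ∫ v₂, ((v₁ - α * v₂) * (if v₂ ≤ max q (v₁ / α) then (1:ℝ) else 0)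
          + (v₂ - α * v₁) * (if v₁ ≤ max q (v₂ / α) then (1:ℝ) else 0)) * (f v₁ * f v₂)) =
      (∫ p : ℝ × ℝ, (p.1 - α * p.2) * χ₁ p * (f p.1 * f p.2)
          ∂((volume : Measure ℝ).prod volume)) +
      ∫ p : ℝ × ℝ, (p.2 - α * p.1) * χ₂ p * (f p.1 * f p.2)
          ∂((volume : Measure ℝ).prod volume) := by
    rw [← integral_add hS1 hS2]
    rw [integral_integral ((hS1.add hS2).congr (Filter.Eventually.of_forall fun p => by
      simp only [Function.uncurry, hχ₁def, hχ₂def, Pi.add_apply]; ring))]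
    apply integral_congr_ae
    refine Filter.Eventually.of_forall fun p => ?_
    simp only [hχ₁def, hχ₂def]
    ring
  rw [hLHS, hRHS]
  -- part 1 : the h₁ term
  have part1 : (∫ p : ℝ × ℝ, (p.1 - α * p.2) * h₁ p.1 p.2 * (f p.1 * f p.2)
        ∂((volume : Measure ℝ).prod volume)) ≤
      ∫ p : ℝ × ℝ, (p.1 - α * p.2) * χ₁ p * (f p.1 * f p.2)
        ∂((volume : Measure ℝ).prod volume) := by
    rw [integral_prod _ hF1, integral_prod _ hS1]
    refine integral_mono_ae hF1.integral_prod_left hS1.integral_prod_left ?_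
    filter_upwards [hc₁] with v₁ hcon
    have hsec : AEStronglyMeasurable (fun v₂ => h₁ v₁ v₂) volume :=
      (hm₁.comp measurable_prodMk_left).aestronglyMeasurable
    have hkey := key hf_meas hf_nonneg hfi hf_mom hα hq v₁ (fun v₂ => h₁ v₁ v₂)
      hsec (fun v₂ => hb₁ v₁ v₂) hcon
    have e1 : (∫ v₂, (v₁ - α * v₂) * h₁ v₁ v₂ * (f v₁ * f v₂)) =
        f v₁ * ∫ v₂, (v₁ - α * v₂) * h₁ v₁ v₂ * f v₂ := by
      rw [← integral_const_mul]
      apply integral_congr_ae; exact Filter.Eventually.of_forall fun v₂ => by ring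
    have e2 : (∫ v₂, (v₁ - α * v₂) * χ₁ (v₁, v₂) * (f v₁ * f v₂)) =
        f v₁ * ∫ v₂, (v₁ - α * v₂) * (if v₂ ≤ max q (v₁ / α) then (1:ℝ) else 0) * f v₂ := by
      rw [← integral_const_mul]
      apply integral_congr_ae; exact Filter.Eventually.of_forall fun v₂ => by
        simp only [hχ₁def]; ring
    rw [e1, e2]
    exact mul_le_mul_of_nonneg_left hkey (hf_nonneg v₁)
  -- part 2 : the h₂ term (swap integration order)
  have part2 : (∫ p : ℝ × ℝ, (p.2 - α * p.1) * h₂ p.1 p.2 * (f p.1 * f p.2)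
        ∂((volume : Measure ℝ).prod volume)) ≤
      ∫ p : ℝ × ℝ, (p.2 - α * p.1) * χ₂ p * (f p.1 * f p.2)
        ∂((volume : Measure ℝ).prod volume) := by
    rw [integral_prod_symm _ hF2, integral_prod_symm _ hS2]
    refine integral_mono_ae hF2.integral_prod_right hS2.integral_prod_right ?_
    filter_upwards [hc₂] with v₂ hcon
    have hsec : AEStronglyMeasurable (fun v₁ => h₂ v₁ v₂) volume :=
      (hm₂.comp measurable_prodMk_right).aestronglyMeasurable
    have hkey := key hf_meas hf_nonneg hfi hf_mom hα hq v₂ (fun v₁ => h₂ v₁ v₂)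
      hsec (fun v₁ => hb₂ v₁ v₂) hcon
    have e1 : (∫ v₁, (v₂ - α * v₁) * h₂ v₁ v₂ * (f v₁ * f v₂)) =
        f v₂ * ∫ v₁, (v₂ - α * v₁) * h₂ v₁ v₂ * f v₁ := by
      rw [← integral_const_mul]
      apply integral_congr_ae; exact Filter.Eventually.of_forall fun v₁ => by ring
    have e2 : (∫ v₁, (v₂ - α * v₁) * χ₂ (v₁, v₂) * (f v₁ * f v₂)) =
        f v₂ * ∫ v₁, (v₂ - α * v₁) * (if v₁ ≤ max q (v₂ / α) then (1:ℝ) else 0) * f v₁ := by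
      rw [← integral_const_mul]
      apply integral_congr_ae; exact Filter.Eventually.of_forall fun v₁ => by
        simp only [hχ₂def]; ring
    rw [e1, e2]
    exact mul_le_mul_of_nonneg_left hkey (hf_nonneg v₂)
  linarith
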